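/- Let T be a bounded self-adjoint operator on a Hilbert space K. Then the image of T², with the operator-range inner product of T, is dense in the operator range M(T), and for all x, y in K one has ⟨Tx, T²y⟩_{M(T)} = ⟨Tx, y⟩_K. -/

import Mathlib

/- STATEMENT 0: Let T be a bounded self-adjoint operator on a Hilbert space K.  Then the
image of T², with the operator-range inner product of T, is dense in the operator range
M(T) (expressed by the orthogonality criterion: any element of M(T) orthogonal in M(T)
to the image of T² is zero), and ⟨Tx, T²y⟩_{M(T)} = ⟨Tx, y⟩_K for all x, y ∈ K.

The operator-range inner product on M(T) = range T is encoded by the function `ip`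
satisfying `ip (T x) (T y) = ⟪x, y⟫` whenever `x ∈ (ker T)ᗮ`, which is exactly
⟨Tx, Ty⟩_{M(T)} = ⟨P_{(ker T)^⊥} x, y⟩_K. -/

open scoped ComplexInnerProductSpace

theorem stmt_0 {K : Type*} [NormedAddCommGroup K] [InnerProductSpace ℂ K] [CompleteSpace K]
    (T : K →L[ℂ] K) (hT : IsSelfAdjoint T)
    (ip : K → K → ℂ)
    (hip : ∀ x y : K, x ∈ (LinearMap.ker (T : K →ₗ[ℂ] K))ᗮ → ip (T x) (T y) = ⟪x, y⟫) :
    (∀ x : K, (∀ y : K, ip (T x) (T (T y)) = 0) → T x = 0) ∧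
      ∀ x y : K, ip (T x) (T (T y)) = ⟪T x, y⟫ := by
  have hsymm : ∀ a b : K, ⟪T a, b⟫ = ⟪a, T b⟫ :=
    (ContinuousLinearMap.isSelfAdjoint_iff_isSymmetric.mp hT)
  have hclosed : IsClosed ((LinearMap.ker (T : K →ₗ[ℂ] K) : Submodule ℂ K) : Set K) :=
    ContinuousLinearMap.isClosed_ker T
  haveI : CompleteSpace (LinearMap.ker (T : K →ₗ[ℂ] K)) := hclosed.completeSpace_coe
  have key : ∀ x y : K, ip (T x) (T (T y)) = ⟪T x, y⟫ := by
    intro x y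
    set P := Submodule.orthogonalProjectionOnto (LinearMap.ker (T : K →ₗ[ℂ] K))ᗮ with hP
    have hmem : (P x : K) ∈ (LinearMap.ker (T : K →ₗ[ℂ] K))ᗮ := (P x).2
    have hker : x - (P x : K) ∈ LinearMap.ker (T : K →ₗ[ℂ] K) := by
      have h1 : x - (P x : K) ∈ ((LinearMap.ker (T : K →ₗ[ℂ] K))ᗮ)ᗮ :=
        Submodule.sub_starProjection_mem_orthogonal (K := (LinearMap.ker (T : K →ₗ[ℂ] K))ᗮ) x
      rwa [Submodule.orthogonal_orthogonal] at h1
    have hTx : T x = T (P x : K) := by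
      have h0 : T (x - (P x : K)) = 0 := hker
      rw [map_sub, sub_eq_zero] at h0
      exact h0
    calc ip (T x) (T (T y)) = ip (T (P x : K)) (T (T y)) := by rw [hTx]
      _ = ⟪(P x : K), T y⟫ := hip _ _ hmem
      _ = ⟪T (P x : K), y⟫ := (hsymm _ _).symm
      _ = ⟪T x, y⟫ := by rw [hTx]
  refine ⟨fun x hx => ?_, key⟩
  have h := hx (T x)
  rw [key] at h
  exact inner_self_eq_zero.mp h
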